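/- Let p be an odd prime and q a prime power with p not dividing q. Let e = ord_p(q) be the multiplicative order of q modulo p, let r be such that p^r exactly divides q^e − 1, and let v, n be natural numbers with e·p^v ≤ n < e·p^(v+1). Then exp_p(GL_n(F_q)) = p^(r+v). -/

import Mathlib

open Polynomial

theorem keyval (p q e r : ℕ) (hp : p.Prime) (hodd : Odd p) (hq2 : 2 ≤ q) (hpq : ¬ p ∣ q)
    (he1 : 1 ≤ e) (hdvd : p ∣ q ^ e - 1)
    (hr : p ^ r ∣ q ^ e - 1 ∧ ¬ p ^ (r + 1) ∣ q ^ e - 1)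
    (s : ℕ) (hs : s ≠ 0) :
    padicValNat p (q ^ (e * s) - 1) = r + padicValNat p s := by
  haveI : Fact p.Prime := ⟨hp⟩
  have hqe : 1 < q ^ e := Nat.one_lt_pow (by omega) (by omega)
  have hx : ¬ p ∣ q ^ e := fun h => hpq (hp.dvd_of_dvd_pow h)
  have key := padicValNat.pow_sub_pow (p := p) (x := q ^ e) (y := 1) hodd hqe
    (by simpa using hdvd) hx hs
  have hre : padicValNat p (q ^ e - 1) = r := by
    have h1 : q ^ e - 1 ≠ 0 := by omega
    have h2 : r ≤ padicValNat p (q ^ e - 1) :=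
      (padicValNat_dvd_iff_le (p := p) (a := q ^ e - 1) (n := r) h1).mp hr.1
    have h3 : ¬ (r + 1 ≤ padicValNat p (q ^ e - 1)) := fun h =>
      hr.2 ((padicValNat_dvd_iff_le (p := p) (a := q ^ e - 1) (n := r + 1) h1).mpr h)
    omega
  rw [← pow_mul, one_pow] at key
  rw [key, hre]

theorem card_ext (F : Type) [Field F] [Fintype F] (m : ℕ) (hm : m ≠ 0) :
    ∃ (K : Type) (_ : Field K) (_ : Fintype K) (_ : Algebra F K),
      Fintype.card K = Fintype.card F ^ m := by
  classical
  set q := Fintype.card F with hq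
  have hq2 : 1 < q := Fintype.one_lt_card
  obtain ⟨t, hl, hcard⟩ := FiniteField.card F (ringChar F)
  set ℓ := ringChar F
  haveI : Fact ℓ.Prime := ⟨hl⟩
  set f : F[X] := X ^ q ^ m - X with hf
  have hqm1 : 1 < q ^ m := Nat.one_lt_pow hm hq2
  have hfne : f ≠ 0 := FiniteField.X_pow_card_pow_sub_X_ne_zero _ hm hq2
  have hfdeg : f.natDegree = q ^ m := FiniteField.X_pow_card_pow_sub_X_natDegree_eq _ hm hq2
  let K := SplittingField f
  haveI : CharP K ℓ := charP_of_injective_algebraMap (algebraMap F K).injective ℓ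
  haveI : Finite K := Module.finite_of_finite F
  haveI : Fintype K := Fintype.ofFinite K
  have hql : q = ℓ ^ (t : ℕ) := hq.trans hcard
  have hldvd : ℓ ∣ q ^ m := dvd_pow (hql ▸ dvd_pow_self ℓ t.2.ne') hm
  have hsep : f.Separable := galois_poly_separable ℓ (q ^ m) hldvd
  -- every element of K is a root of f
  have hroot : ∀ x : K, x ^ q ^ m = x := by
    have hqml : q ^ m = ℓ ^ ((t : ℕ) * m) := by rw [hql, ← pow_mul]
    let S : Subring K := RingHom.eqLocus (iterateFrobenius K ℓ (t * m)) (RingHom.id K)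
    have hS : ∀ x : K, x ∈ S ↔ x ^ q ^ m = x := by
      intro x
      simp [S, RingHom.eqLocus, iterateFrobenius_def, hqml]
    have htop : ∀ x : K, x ∈ S := by
      intro x
      have hx : x ∈ Algebra.adjoin F (f.rootSet K) := by
        rw [SplittingField.adjoin_rootSet f]; trivial
      rw [Algebra.mem_adjoin_iff] at hx
      refine Subring.closure_le.mpr ?_ hx
      rintro y (⟨r, rfl⟩ | hy) <;> simp only [SetLike.mem_coe]
      · rw [hS, ← map_pow]
        congr 1
        exact FiniteField.pow_card_pow m r
      · rw [hS]
        rw [mem_rootSet_of_ne hfne] at hy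
        have h2 : (aeval y) f = y ^ q ^ m - y := by simp [hf]
        rw [h2] at hy
        exact sub_eq_zero.mp hy
    intro x; exact (hS x).mp (htop x)
  -- counting
  have hsplits : Splits (f.map (algebraMap F K)) :=
    SplittingField.splits f
  have hcardroot : Fintype.card (f.rootSet K) = q ^ m := by
    rw [card_rootSet_eq_natDegree hsep (SplittingField.splits f), hfdeg]
  have huniv : f.rootSet K = Set.univ := by
    ext x
    simp only [Set.mem_univ, iff_true]
    rw [mem_rootSet_of_ne hfne]
    simp [hf, hroot x, sub_eq_zero]
  have : Fintype.card K = q ^ m := by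
    rw [← hcardroot]
    exact (Fintype.card_congr ((Equiv.setCongr huniv).trans (Equiv.Set.univ K))).symm
  exact ⟨K, inferInstance, inferInstance, inferInstance, this⟩

theorem aux_unitsEnd (F K W : Type) [Field F] [Field K] [Algebra F K] [AddCommGroup W]
    [Module F W] :
    ∃ φ : Kˣ →* (Module.End F (K × W))ˣ, Function.Injective φ := by
  let toEnd : K →* Module.End F (K × W) :=
    { toFun := fun a => (LinearMap.mulLeft F a).prodMap (1 : Module.End F W)
      map_one' := by
        refine LinearMap.ext fun w => Prod.ext ?_ ?_ <;>
          simp [LinearMap.prodMap_apply, LinearMap.mulLeft_apply]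
      map_mul' := fun a b => by
        refine LinearMap.ext fun w => Prod.ext ?_ ?_ <;>
          simp [Module.End.mul_apply, LinearMap.prodMap_apply, LinearMap.mulLeft_apply,
            mul_assoc] }
  refine ⟨Units.map toEnd, fun a b hab => ?_⟩
  have hab2 : ((Units.map toEnd a : Module.End F (K × W)) : K × W →ₗ[F] K × W)
      = ((Units.map toEnd b : Module.End F (K × W)) : K × W →ₗ[F] K × W) := by rw [hab]
  have h1 := LinearMap.congr_fun hab2 (1, 0)
  simp only [toEnd, Units.coe_map, MonoidHom.coe_mk, OneHom.coe_mk, MonoidHom.coe_coe,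
    LinearMap.prodMap_apply, LinearMap.mulLeft_apply, mul_one, Prod.mk.injEq] at h1
  exact Units.ext h1.1

theorem singer (F : Type) [Field F] [Fintype F] (m n : ℕ) (hm : m ≠ 0) (hmn : m ≤ n)
    (K : Type) [Field K] [Fintype K] [Algebra F K] (hK : Fintype.card K = Fintype.card F ^ m) :
    ∃ g : Matrix.GeneralLinearGroup (Fin n) F, orderOf g = Fintype.card F ^ m - 1 := by
  classical
  haveI : FiniteDimensional F K := Module.Finite.of_finite
  have hrank : Module.finrank F K = m := by
    have := Module.card_eq_pow_finrank (K := F) (V := K)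
    rw [hK] at this
    exact (Nat.pow_right_injective Fintype.one_lt_card this.symm)
  -- the module V
  let V := K × (Fin (n - m) → F)
  obtain ⟨ψ, hψ⟩ := aux_unitsEnd F K (Fin (n - m) → F)
  -- basis of V indexed by Fin n
  let bK := Module.finBasis F K
  rw [hrank] at bK
  let bV : Module.Basis (Fin m ⊕ Fin (n - m)) F V := bK.prod (Pi.basisFun F (Fin (n - m)))
  let bV' : Module.Basis (Fin n) F V := bV.reindex ((finSumFinEquiv).trans (finCongr (by omega)))
  let e : Module.End F V ≃* Matrix (Fin n) (Fin n) F :=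
    (LinearMap.toMatrixAlgEquiv bV').toRingEquiv.toMulEquiv
  let Φ : (Module.End F V)ˣ ≃* (Matrix (Fin n) (Fin n) F)ˣ := Units.mapEquiv e
  obtain ⟨u, hu⟩ := IsCyclic.exists_generator (α := Kˣ)
  refine ⟨Φ (ψ u), ?_⟩
  have h1 : orderOf (Φ (ψ u)) = orderOf (ψ u) := orderOf_injective Φ.toMonoidHom Φ.injective _
  have h2 : orderOf (ψ u) = orderOf u := orderOf_injective ψ hψ u
  rw [h1, h2, orderOf_eq_card_of_forall_mem_zpowers hu, Nat.card_eq_fintype_card,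
    Fintype.card_units, hK]

theorem upper_aux (F : Type) [Field F] [Fintype F] (n : ℕ) (hn : 0 < n) (p k : ℕ)
    (hp : p.Prime) (hpchar : (p : F) ≠ 0) (hk : k ≠ 0)
    (g : Matrix.GeneralLinearGroup (Fin n) F) (hg : orderOf g = p ^ k) :
    ∃ d, 0 < d ∧ d ≤ n ∧ p ^ k ∣ Fintype.card F ^ d - 1 := by
  classical
  set M : Matrix (Fin n) (Fin n) F := (g : Matrix (Fin n) (Fin n) F) with hMdef
  have hM1 : M ^ p ^ k = 1 := by
    have := pow_orderOf_eq_one g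
    rw [hg] at this
    calc M ^ p ^ k = ((g ^ p ^ k : Matrix.GeneralLinearGroup (Fin n) F) :
        Matrix (Fin n) (Fin n) F) := by rw [Units.val_pow_eq_pow_val]
    _ = 1 := by rw [this]; rfl
  have hM2 : M ^ p ^ (k - 1) ≠ 1 := by
    intro hM
    have : g ^ p ^ (k - 1) = 1 := by
      apply Units.ext
      rw [Units.val_pow_eq_pow_val, ← hMdef, hM]; rfl
    have h2 := orderOf_dvd_of_pow_eq_one this
    rw [hg] at h2
    have := (Nat.pow_dvd_pow_iff_le_right hp.one_lt).mp h2
    omega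
  have hint : IsIntegral F M := .of_finite F M
  set μ := minpoly F M with hμdef
  have hμ0 : μ ≠ 0 := minpoly.ne_zero hint
  have hdvd1 : μ ∣ X ^ p ^ k - 1 := by
    apply minpoly.dvd
    simp [hM1]
  have hpk1 : ((p ^ k : ℕ) : F) ≠ 0 := by
    push_cast
    exact pow_ne_zero _ hpchar
  have hsep_big : (X ^ p ^ k - 1 : F[X]).Separable := by
    have := Polynomial.separable_X_pow_sub_C (F := F) (1 : F) hpk1 one_ne_zero
    simpa using this
  have hμsep : μ.Separable := hsep_big.of_dvd hdvd1
  have hsf : Squarefree μ := hμsep.squarefree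
  set h : F[X] := X ^ p ^ (k - 1) - 1 with hhdef
  have hh0 : h ≠ 0 := by
    have := Polynomial.X_pow_sub_C_ne_zero (n := p ^ (k - 1)) (pow_pos hp.pos _) (1 : F)
    simpa using this
  have hμh : ¬ μ ∣ h := by
    intro hd
    obtain ⟨c, hc⟩ := hd
    apply hM2
    have h3 : Polynomial.aeval M h = 0 := by rw [hc, map_mul, minpoly.aeval, zero_mul]
    rw [hhdef] at h3
    simp only [map_sub, map_pow, aeval_X, map_one] at h3
    exact sub_eq_zero.mp h3
  -- find an irreducible factor of μ not dividing h
  set dg : F[X] := EuclideanDomain.gcd μ h with hdg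
  obtain ⟨c, hc⟩ := EuclideanDomain.gcd_dvd_left μ h
  have hcne : c ≠ 0 := by
    intro h0
    rw [h0, mul_zero] at hc
    exact hμ0 hc
  have hcnu : ¬ IsUnit c := by
    intro hu
    apply hμh
    have : μ ∣ dg := by
      obtain ⟨w, hw⟩ := hu.exists_right_inv
      exact ⟨w, by rw [hc, mul_assoc, hw, mul_one]⟩
    exact this.trans (EuclideanDomain.gcd_dvd_right μ h)
  obtain ⟨π, hπirr, hπc⟩ := WfDvdMonoid.exists_irreducible_factor hcnu hcne
  have hπμ : π ∣ μ := hπc.trans ⟨dg, by rw [hc, mul_comm]⟩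
  have hπh : ¬ π ∣ h := by
    intro hd
    have hπg : π ∣ dg := EuclideanDomain.dvd_gcd hπμ hd
    have hsq : π * π ∣ μ := by
      rw [hc]
      exact mul_dvd_mul hπg hπc
    exact hπirr.not_isUnit (hsf π hsq)
  -- pass to the field L = F[X]/(π)
  haveI : Fact (Irreducible π) := ⟨hπirr⟩
  have hπ0 : π ≠ 0 := hπirr.ne_zero
  let L := AdjoinRoot π
  let pb : PowerBasis F L := AdjoinRoot.powerBasis hπ0
  haveI : Module.Finite F L := pb.finite
  haveI : Finite L := Module.finite_of_finite F
  haveI : Fintype L := Fintype.ofFinite L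
  have hfinrank : Module.finrank F L = π.natDegree := by
    rw [pb.finrank, AdjoinRoot.powerBasis_dim]
  have hcardL : Fintype.card L = Fintype.card F ^ π.natDegree := by
    rw [Module.card_eq_pow_finrank (K := F) (V := L), hfinrank]
  set lam : L := AdjoinRoot.root π with hlam
  have hlamk : lam ^ p ^ k = 1 := by
    have : AdjoinRoot.mk π (X ^ p ^ k - 1) = 0 :=
      AdjoinRoot.mk_eq_zero.mpr (hπμ.trans hdvd1)
    simp only [map_sub, map_pow, AdjoinRoot.mk_X, map_one] at this
    exact sub_eq_zero.mp this
  have hlamk1 : lam ^ p ^ (k - 1) ≠ 1 := by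
    intro h1
    apply hπh
    apply AdjoinRoot.mk_eq_zero.mp
    rw [hhdef]
    simp only [map_sub, map_pow, AdjoinRoot.mk_X, map_one]
    rw [← hlam, h1, sub_self]
  have hord : orderOf lam = p ^ k := by
    have hdvd := orderOf_dvd_of_pow_eq_one hlamk
    obtain ⟨j, hj, horder⟩ := (Nat.dvd_prime_pow hp).mp hdvd
    rcases Nat.lt_or_ge j k with hjk | hjk
    · exfalso
      apply hlamk1
      have : orderOf lam ∣ p ^ (k - 1) := by
        rw [horder]
        exact pow_dvd_pow p (by omega)
      exact orderOf_dvd_iff_pow_eq_one.mp this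
    · rw [horder]
      congr 1
      omega
  have hlam0 : lam ≠ 0 := by
    intro h0
    rw [h0, zero_pow (pow_ne_zero _ hp.ne_zero)] at hlamk
    exact one_ne_zero hlamk.symm
  set u : Lˣ := Units.mk0 lam hlam0 with hu
  have hordu : orderOf u = p ^ k := by
    rw [← orderOf_units (y := u)]
    simpa [hu] using hord
  have hdvdcard : p ^ k ∣ Fintype.card L - 1 := by
    have := orderOf_dvd_card (x := u)
    rw [hordu, Fintype.card_units] at this
    exact this
  refine ⟨π.natDegree, hπirr.natDegree_pos, ?_, ?_⟩
  · have hch : μ ∣ M.charpoly := Matrix.minpoly_dvd_charpoly M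
    have hchdeg : M.charpoly.natDegree = n := by
      rw [Matrix.charpoly_natDegree_eq_dim, Fintype.card_fin]
    have hchne : M.charpoly ≠ 0 := (Matrix.charpoly_monic M).ne_zero
    calc π.natDegree ≤ M.charpoly.natDegree :=
          Polynomial.natDegree_le_of_dvd (hπμ.trans hch) hchne
    _ = n := hchdeg
  · rw [← hcardL]
    exact hdvdcard


/-- Let `p` be an odd prime not dividing the prime power `q`, let `e` be the
multiplicative order of `q` mod `p`, let `p^r` exactly divide `q^e - 1`, and let
`e·p^v ≤ n < e·p^(v+1)`. Then the `p`-part of the exponent of `GL_n(F_q)` is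
`p^(r+v)`. -/
theorem exponent_p_part_generalLinearGroup (p q : ℕ) (hp : p.Prime) (hodd : Odd p)
    (hq : IsPrimePow q) (hpq : ¬ p ∣ q)
    (F : Type) [Field F] [Fintype F] (hF : Fintype.card F = q)
    (e r v n : ℕ) (he : orderOf (q : ZMod p) = e)
    (hr : p ^ r ∣ q ^ e - 1 ∧ ¬ p ^ (r + 1) ∣ q ^ e - 1)
    (hn1 : e * p ^ v ≤ n) (hn2 : n < e * p ^ (v + 1)) :
    p ^ (r + v) ∣ Monoid.exponent (Matrix.GeneralLinearGroup (Fin n) F) ∧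
      ¬ p ^ (r + v + 1) ∣ Monoid.exponent (Matrix.GeneralLinearGroup (Fin n) F) := by
  classical
  haveI : Fact p.Prime := ⟨hp⟩
  have hq2 : 2 ≤ q := hq.two_le
  have he1 : 0 < e := by
    rcases Nat.eq_zero_or_pos e with rfl | h
    · simp at hn2
    · exact h
  have hcast : ∀ N : ℕ, 1 ≤ N → (p ∣ N - 1 ↔ (N : ZMod p) = 1) := by
    intro N hN
    rw [← ZMod.natCast_eq_zero_iff (N - 1) p, Nat.cast_sub hN, Nat.cast_one,
      sub_eq_zero]
  have hqe1 : 1 ≤ q ^ e := Nat.one_le_pow _ _ (by omega)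
  have hdvd_e : p ∣ q ^ e - 1 := by
    rw [hcast _ hqe1]
    push_cast
    rw [← he]
    exact pow_orderOf_eq_one _
  have hn0 : 0 < n := lt_of_lt_of_le (Nat.mul_pos he1 (pow_pos hp.pos v)) hn1
  constructor
  · -- lower bound
    set m := e * p ^ v with hm
    have hm0 : m ≠ 0 := (Nat.mul_pos he1 (pow_pos hp.pos v)).ne'
    obtain ⟨K, _, _, _, hK⟩ := card_ext F m hm0
    obtain ⟨g, hgord⟩ := singer F m n hm0 hn1 K hK
    have hdvdord : p ^ (r + v) ∣ orderOf g := by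
      rw [hgord, hF]
      have hqm1 : q ^ m - 1 ≠ 0 := by
        have : 2 ≤ q ^ m := by
          calc 2 ≤ q := hq2
          _ = q ^ 1 := (pow_one q).symm
          _ ≤ q ^ m := Nat.pow_le_pow_right (by omega) (by omega)
        omega
      rw [padicValNat_dvd_iff_le hqm1]
      rw [hm, keyval p q e r hp hodd hq2 hpq he1 hdvd_e hr (p ^ v) (pow_pos hp.pos v).ne']
      rw [padicValNat.prime_pow]
    exact hdvdord.trans (Monoid.order_dvd_exponent g)
  · -- upper bound
    intro hcon
    have hexp0 : Monoid.exponent (Matrix.GeneralLinearGroup (Fin n) F) ≠ 0 :=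
      Monoid.exponent_ne_zero_of_finite
    set k := (Monoid.exponent (Matrix.GeneralLinearGroup (Fin n) F)).factorization p with hkdef
    have hk : r + v + 1 ≤ k := (hp.pow_dvd_iff_le_factorization hexp0).mp hcon
    obtain ⟨g, hgord⟩ := hp.exists_orderOf_eq_pow_factorization_exponent
      (G := Matrix.GeneralLinearGroup (Fin n) F)
    have hpchar : (p : F) ≠ 0 := by
      intro h0
      set ℓ := ringChar F with hl
      obtain ⟨t, hlp, hcard⟩ := FiniteField.card F ℓ
      have hlp2 : ℓ ∣ p := (CharP.cast_eq_zero_iff F ℓ p).mp h0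
      have : ℓ = p := (Nat.prime_dvd_prime_iff_eq hlp hp).mp hlp2
      apply hpq
      rw [← this, ← hF, hcard]
      exact dvd_pow_self ℓ t.2.ne'
    obtain ⟨d, hd1, hdn, hdvd⟩ := upper_aux F n hn0 p k hp hpchar (by omega) g hgord
    rw [hF] at hdvd
    have hqd1 : 1 ≤ q ^ d := Nat.one_le_pow _ _ (by omega)
    have hqdne : q ^ d - 1 ≠ 0 := by
      have : 2 ≤ q ^ d := by
        calc 2 ≤ q := hq2
        _ = q ^ 1 := (pow_one q).symm
        _ ≤ q ^ d := Nat.pow_le_pow_right (by omega) (by omega)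
      omega
    have hpd : p ∣ q ^ d - 1 := dvd_trans (dvd_pow_self p (by omega)) hdvd
    have hed : e ∣ d := by
      rw [hcast _ hqd1] at hpd
      push_cast at hpd
      rw [← he]
      exact orderOf_dvd_of_pow_eq_one hpd
    obtain ⟨s, rfl⟩ := hed
    have hs0 : s ≠ 0 := by
      intro h0
      rw [h0, mul_zero] at hd1
      omega
    have hval := keyval p q e r hp hodd hq2 hpq he1 hdvd_e hr s hs0
    have hk2 : k ≤ padicValNat p (q ^ (e * s) - 1) :=
      (padicValNat_dvd_iff_le hqdne).mp hdvd
    rw [hval] at hk2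
    have hv1 : v + 1 ≤ padicValNat p s := by omega
    have hps : p ^ (v + 1) ∣ s := (padicValNat_dvd_iff_le hs0).mpr hv1
    have hsle : p ^ (v + 1) ≤ s := Nat.le_of_dvd (by omega) hps
    have : e * p ^ (v + 1) ≤ e * s := Nat.mul_le_mul_left e hsle
    omega
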